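/- arXiv:2601.10626 — 4 statements merged into one kernel-verified Lean document; each statement's English description precedes it below -/
import Mathlib

section
/- Let g : [0,1] → [0,∞) be a function and let W be a random real symmetric positive semi-definite d×d matrix such that for every unit vector u ∈ R^d and every ξ ∈ [0,1], P(|u^T W u| > g(ξ)) ≤ ξ. Then for every ξ ∈ [0,1], P(‖W‖ > 2 g(ξ/9^d)) ≤ ξ. -/
open MeasureTheory

open Metric
open scoped ENNReal NNReal RealInnerProductSpace



lemma norm_le_two_mul_of_net {E : Type*} [NormedAddCommGroup E] [InnerProductSpace ℝ E]
    (T : E →L[ℝ] E) (hsym : ∀ x y : E, ⟪T x, y⟫ = ⟪x, T y⟫)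
    (N : Finset E) (hN1 : ∀ u ∈ N, ‖u‖ = 1)
    (hnet : ∀ v : E, ‖v‖ = 1 → ∃ u ∈ N, ‖v - u‖ ≤ 1/4)
    {M : ℝ} (hM : 0 ≤ M) (hbound : ∀ u ∈ N, |⟪T u, u⟫| ≤ M) : ‖T‖ ≤ 2 * M := by
  set c := M + ‖T‖ / 2 with hc
  have hc0 : 0 ≤ c := by positivity
  -- Step A: quadratic form bounded by c on the sphere
  have stepA : ∀ v : E, ‖v‖ = 1 → |⟪T v, v⟫| ≤ c := by
    intro v hv
    obtain ⟨u, huN, huv⟩ := hnet v hv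
    have hu : ‖u‖ = 1 := hN1 u huN
    have key : ⟪T v, v⟫ - ⟪T u, u⟫ = ⟪T (v - u), v⟫ + ⟪T u, v - u⟫ := by
      simp only [map_sub, inner_sub_left, inner_sub_right]; ring
    have b1 : |⟪T (v - u), v⟫| ≤ ‖T‖ / 4 := by
      calc |⟪T (v - u), v⟫| ≤ ‖T (v - u)‖ * ‖v‖ := abs_real_inner_le_norm _ _
        _ ≤ (‖T‖ * ‖v - u‖) * ‖v‖ := by gcongr; exact T.le_opNorm _
        _ ≤ (‖T‖ * (1/4)) * 1 := by
            have := norm_nonneg T; gcongr <;> simp [hv, huv]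
        _ = ‖T‖ / 4 := by ring
    have b2 : |⟪T u, v - u⟫| ≤ ‖T‖ / 4 := by
      calc |⟪T u, v - u⟫| ≤ ‖T u‖ * ‖v - u‖ := abs_real_inner_le_norm _ _
        _ ≤ (‖T‖ * ‖u‖) * (1/4) := by gcongr; exact T.le_opNorm _
        _ = ‖T‖ / 4 := by rw [hu]; ring
    have hMu := hbound u huN
    have := abs_sub_abs_le_abs_sub (⟪T v, v⟫) (⟪T u, u⟫)
    rw [key] at this
    have habs := abs_add_le (⟪T (v - u), v⟫) (⟪T u, v - u⟫)
    simp only [hc]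
    linarith
  -- Step B: scaling
  have stepB : ∀ w : E, |⟪T w, w⟫| ≤ c * ‖w‖ ^ 2 := by
    intro w
    rcases eq_or_ne w 0 with rfl | hw
    · simp
    · have hnw : (0:ℝ) < ‖w‖ := norm_pos_iff.mpr hw
      have hv : ‖(‖w‖⁻¹ • w)‖ = 1 := by
        rw [norm_smul, norm_inv, norm_norm]; field_simp
      have := stepA _ hv
      have hq : ⟪T (‖w‖⁻¹ • w), ‖w‖⁻¹ • w⟫ = ‖w‖⁻¹ ^ 2 * ⟪T w, w⟫ := by
        rw [T.map_smul, real_inner_smul_left, real_inner_smul_right]; ring_nf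
      rw [hq, abs_mul, abs_of_nonneg (by positivity : (0:ℝ) ≤ ‖w‖⁻¹ ^ 2)] at this
      have h2 : ‖w‖⁻¹ ^ 2 * |⟪T w, w⟫| * ‖w‖ ^ 2 ≤ c * ‖w‖ ^ 2 := by nlinarith
      have h3 : ‖w‖⁻¹ ^ 2 * ‖w‖ ^ 2 = 1 := by field_simp
      have h4 : |⟪T w, w⟫| = ‖w‖⁻¹ ^ 2 * |⟪T w, w⟫| * ‖w‖ ^ 2 := by
        rw [mul_comm (‖w‖⁻¹ ^ 2) _, mul_assoc, h3, mul_one]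
      exact le_of_eq_of_le h4 h2
  -- Step C: bilinear bound on unit vectors
  have stepC : ∀ x y : E, ‖x‖ = 1 → ‖y‖ = 1 → ⟪T x, y⟫ ≤ c := by
    intro x y hx hy
    have hpol : 4 * ⟪T x, y⟫ = ⟪T (x + y), x + y⟫ - ⟪T (x - y), x - y⟫ := by
      have hyx : ⟪T y, x⟫ = ⟪T x, y⟫ := by
        rw [hsym y x, real_inner_comm]
      simp only [map_add, map_sub, inner_add_left, inner_add_right, inner_sub_left,
        inner_sub_right]
      linarith
    have hpar : ‖x + y‖ ^ 2 + ‖x - y‖ ^ 2 = 4 := by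
      have h1 := norm_add_sq_real x y
      have h2 := norm_sub_sq_real x y
      rw [hx, hy] at h1 h2; nlinarith
    have b1 := (abs_le.mp (stepB (x + y))).2
    have b2 := (abs_le.mp (stepB (x - y))).1
    nlinarith
  -- Step D: operator norm bound
  have stepD : ‖T‖ ≤ c := by
    refine T.opNorm_le_bound hc0 fun x => ?_
    rcases eq_or_ne x 0 with rfl | hx
    · simp
    rcases eq_or_ne (T x) 0 with hTx | hTx
    · rw [hTx]; simp; positivity
    have hnx : (0:ℝ) < ‖x‖ := norm_pos_iff.mpr hx
    have hnTx : (0:ℝ) < ‖T x‖ := norm_pos_iff.mpr hTx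
    have hx1 : ‖(‖x‖⁻¹ • x)‖ = 1 := by rw [norm_smul, norm_inv, norm_norm]; field_simp
    have hy1 : ‖(‖T x‖⁻¹ • T x)‖ = 1 := by rw [norm_smul, norm_inv, norm_norm]; field_simp
    have := stepC _ _ hx1 hy1
    have hq : ⟪T (‖x‖⁻¹ • x), ‖T x‖⁻¹ • T x⟫ = ‖x‖⁻¹ * ‖T x‖⁻¹ * ‖T x‖ ^ 2 := by
      rw [T.map_smul, real_inner_smul_left, real_inner_smul_right,
        real_inner_self_eq_norm_sq]
      ring
    rw [hq] at this
    have h2 : ‖x‖⁻¹ * ‖T x‖⁻¹ * ‖T x‖ ^ 2 = ‖T x‖ / ‖x‖ := by field_simp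
    rw [h2, div_le_iff₀ hnx] at this
    linarith
  simp only [hc] at stepD
  linarith



lemma exists_net (d : ℕ) : ∃ N : Finset (EuclideanSpace ℝ (Fin d)),
    N.card ≤ 9 ^ d ∧ (∀ u ∈ N, ‖u‖ = 1) ∧
    ∀ v : EuclideanSpace ℝ (Fin d), ‖v‖ = 1 → ∃ u ∈ N, ‖v - u‖ ≤ 1/4 := by
  rcases Nat.eq_zero_or_pos d with rfl | hd
  · refine ⟨∅, by simp, by simp, fun v hv => ?_⟩
    simp [EuclideanSpace.norm_eq] at hv
  haveI : Nonempty (Fin d) := ⟨⟨0, hd⟩⟩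
  set E := EuclideanSpace ℝ (Fin d) with hE
  have hfr : Module.finrank ℝ E = d := finrank_euclideanSpace_fin
  haveI : Nontrivial E := Module.nontrivial_of_finrank_pos (R := ℝ) (by rw [hfr]; exact hd)
  set S : Set (Set E) := {s | (∀ x ∈ s, ‖x‖ = 1) ∧ s.Pairwise fun x y => 1/4 < dist x y}
    with hS
  have hchainub : ∀ c ⊆ S, IsChain (· ⊆ ·) c → ∃ ub ∈ S, ∀ s ∈ c, s ⊆ ub := by
    intro c hcS hchain
    refine ⟨⋃₀ c, ⟨?_, ?_⟩, fun s hs => Set.subset_sUnion_of_mem hs⟩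
    · rintro x ⟨s, hs, hxs⟩
      exact (hcS hs).1 x hxs
    · rintro x ⟨s, hs, hxs⟩ y ⟨t, ht, hyt⟩ hxy
      rcases hchain.total hs ht with hst | hts
      · exact (hcS ht).2 (hst hxs) hyt hxy
      · exact (hcS hs).2 hxs (hts hyt) hxy
  obtain ⟨m, hm⟩ := zorn_subset S hchainub
  have hm1 : ∀ x ∈ m, ‖x‖ = 1 := hm.prop.1
  have hmsep : m.Pairwise fun x y => 1/4 < dist x y := hm.prop.2
  -- net property
  have hnet : ∀ v : E, ‖v‖ = 1 → ∃ u ∈ m, ‖v - u‖ ≤ 1/4 := by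
    intro v hv
    by_contra hcon
    push_neg at hcon
    have hvm : v ∉ m := fun hvm => by
      have := hcon v hvm; simp at this; linarith
    have hins : insert v m ∈ S := by
      constructor
      · rintro x (rfl | hx)
        · exact hv
        · exact hm1 x hx
      · haveI : Std.Symm (fun x y : E => 1/4 < dist x y) := ⟨fun x y h => by rwa [dist_comm]⟩
        rw [Set.pairwise_insert_of_symm]
        exact ⟨hmsep, fun u hu hne => by
          have := hcon u hu; rw [dist_eq_norm]; linarith⟩
    have := hm.eq_of_subset hins (Set.subset_insert v m)
    exact hvm (this ▸ Set.mem_insert v m)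
  -- cardinality bound for finite subsets
  set V := volume (ball (0:E) 1) with hV
  have hV0 : V ≠ 0 := (measure_ball_pos volume 0 one_pos).ne'
  have hVtop : V ≠ ⊤ := measure_ball_lt_top.ne
  have key : ∀ t : Finset E, ↑t ⊆ m → t.card ≤ 9 ^ d := by
    intro t ht
    have hdisj : (↑t : Set E).PairwiseDisjoint (fun x => ball x (1/8)) := by
      intro x hx y hy hxy
      have hsep := hmsep (ht hx) (ht hy) hxy
      exact ball_disjoint_ball (by linarith)
    have hsub : (⋃ x ∈ t, ball x (1/8)) ⊆ ball (0:E) (9/8) := by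
      intro z hz
      simp only [Set.mem_iUnion] at hz
      obtain ⟨x, hx, hzx⟩ := hz
      have hx1 : ‖x‖ = 1 := hm1 x (ht hx)
      rw [mem_ball] at hzx ⊢
      calc dist z 0 ≤ dist z x + dist x 0 := dist_triangle _ _ _
        _ < 1/8 + 1 := by rw [dist_zero_right, hx1]; linarith
        _ ≤ 9/8 := by norm_num
    have hmeas : volume (⋃ x ∈ t, ball x (1/8)) = ∑ x ∈ t, volume (ball x (1/8)) :=
      measure_biUnion_finset hdisj (fun x _ => measurableSet_ball)
    have hball : ∀ x : E, volume (ball x (1/8)) = ENNReal.ofReal ((1/8:ℝ)^d) * V := by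
      intro x
      rw [Measure.addHaar_ball volume x (by norm_num : (0:ℝ) ≤ 1/8), hfr]
    have hball9 : volume (ball (0:E) (9/8)) = ENNReal.ofReal ((9/8:ℝ)^d) * V := by
      rw [Measure.addHaar_ball volume 0 (by norm_num : (0:ℝ) ≤ 9/8), hfr]
    have hle : (t.card : ℝ≥0∞) * ENNReal.ofReal ((1/8:ℝ)^d) * V
        ≤ ENNReal.ofReal ((9/8:ℝ)^d) * V := by
      rw [← hball9]
      calc (t.card : ℝ≥0∞) * ENNReal.ofReal ((1/8:ℝ)^d) * V
          = ∑ x ∈ t, volume (ball x (1/8)) := by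
            simp only [hball, Finset.sum_const, nsmul_eq_mul, mul_assoc]
        _ = volume (⋃ x ∈ t, ball x (1/8)) := hmeas.symm
        _ ≤ volume (ball (0:E) (9/8)) := measure_mono hsub
    rw [ENNReal.mul_le_mul_iff_left hV0 hVtop] at hle
    have hreal : (t.card : ℝ) * (1/8:ℝ)^d ≤ (9/8:ℝ)^d := by
      rw [← ENNReal.ofReal_natCast, ← ENNReal.ofReal_mul (by positivity)] at hle
      exact (ENNReal.ofReal_le_ofReal_iff (by positivity)).mp hle
    have h98 : (9/8:ℝ)^d = 9^d * (1/8)^d := by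
      rw [← mul_pow]; norm_num
    rw [h98] at hreal
    have : (t.card : ℝ) ≤ (9:ℝ)^d :=
      le_of_mul_le_mul_right (by linarith) (by positivity : (0:ℝ) < (1/8:ℝ)^d)
    exact_mod_cast this
  have hfin : m.Finite := by
    by_contra hinf
    obtain ⟨t, hts, htc⟩ := Set.Infinite.exists_subset_card_eq hinf (9^d+1)
    have := key t hts
    omega
  refine ⟨hfin.toFinset, ?_, ?_, ?_⟩
  · exact key _ (by simp)
  · intro u hu; exact hm1 u (hfin.mem_toFinset.mp hu)
  · intro v hv
    obtain ⟨u, hu, huv⟩ := hnet v hv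
    exact ⟨u, hfin.mem_toFinset.mpr hu, huv⟩

/-- Operator (spectral) norm of a real `d × d` matrix, viewed as a linear map on
Euclidean space. -/
noncomputable def opNorm {d : ℕ} (A : Matrix (Fin d) (Fin d) ℝ) : ℝ :=
  ‖(Matrix.toEuclideanCLM (𝕜 := ℝ) A : EuclideanSpace ℝ (Fin d) →L[ℝ] EuclideanSpace ℝ (Fin d))‖

lemma quadform_eq {d : ℕ} (A : Matrix (Fin d) (Fin d) ℝ) (u : EuclideanSpace ℝ (Fin d)) :
    ⟪(Matrix.toEuclideanCLM (𝕜 := ℝ) A :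
        EuclideanSpace ℝ (Fin d) →L[ℝ] EuclideanSpace ℝ (Fin d)) u, u⟫
      = ∑ j, ∑ l, u j * A j l * u l := by
  have happ : ∀ j, ((Matrix.toEuclideanCLM (𝕜 := ℝ) A :
      EuclideanSpace ℝ (Fin d) →L[ℝ] EuclideanSpace ℝ (Fin d)) u) j = ∑ l, A j l * u l := by
    intro j
    rfl
  rw [real_inner_comm]
  simp only [PiLp.inner_apply, RCLike.inner_apply, conj_trivial, happ]
  refine Finset.sum_congr rfl fun j _ => ?_
  rw [Finset.sum_mul]
  exact Finset.sum_congr rfl fun l _ => by ring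

/-- ε-net lifting of tail bounds for quadratic forms of a random symmetric positive
semi-definite matrix: if `P(|uᵀWu| > g(ξ)) ≤ ξ` for every unit vector `u` and every
`ξ ∈ [0,1]`, then `P(‖W‖ > 2 g(ξ/9^d)) ≤ ξ`. -/
theorem stmt_2 {Ω : Type*} [MeasurableSpace Ω] (μ : Measure Ω) [IsProbabilityMeasure μ]
    {d : ℕ} (g : ℝ → ℝ) (hg : ∀ ξ ∈ Set.Icc (0 : ℝ) 1, 0 ≤ g ξ)
    (W : Ω → Matrix (Fin d) (Fin d) ℝ) (hW : ∀ j l, Measurable fun ω => W ω j l)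
    (hpsd : ∀ ω, (W ω).PosSemidef)
    (h : ∀ u : Fin d → ℝ, (∑ j, (u j) ^ 2) = 1 → ∀ ξ ∈ Set.Icc (0 : ℝ) 1,
      μ {ω | g ξ < |∑ j, ∑ l, u j * W ω j l * u l|} ≤ ENNReal.ofReal ξ) :
    ∀ ξ ∈ Set.Icc (0 : ℝ) 1,
      μ {ω | 2 * g (ξ / 9 ^ d) < opNorm (W ω)} ≤ ENNReal.ofReal ξ := by
  intro ξ hξ
  obtain ⟨hξ0, hξ1⟩ := hξ
  have h9 : (1:ℝ) ≤ 9 ^ d := one_le_pow₀ (by norm_num)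
  set ξ' := ξ / 9 ^ d with hξ'def
  have hξ'mem : ξ' ∈ Set.Icc (0:ℝ) 1 := by
    constructor
    · positivity
    · rw [div_le_one (by positivity)]; linarith
  have hgξ' : 0 ≤ g ξ' := hg ξ' hξ'mem
  obtain ⟨N, hNcard, hN1, hNnet⟩ := exists_net d
  -- unit vector condition for elements of the net
  have hsum1 : ∀ u ∈ N, (∑ j, (u j) ^ 2) = 1 := by
    intro u hu
    have := hN1 u hu
    rw [EuclideanSpace.norm_eq] at this
    have h2 : ∑ j, ‖u j‖ ^ 2 = 1 := by
      rwa [Real.sqrt_eq_one] at this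
    simpa [Real.norm_eq_abs, sq_abs] using h2
  -- inclusion into the union of net events
  have hincl : {ω | 2 * g ξ' < opNorm (W ω)} ⊆
      ⋃ u ∈ N, {ω | g ξ' < |∑ j, ∑ l, u j * W ω j l * u l|} := by
    intro ω hω
    simp only [Set.mem_setOf_eq] at hω
    by_contra hcon
    simp only [Set.mem_iUnion, Set.mem_setOf_eq, not_exists, not_lt] at hcon
    have hsym : ∀ x y : EuclideanSpace ℝ (Fin d),
        ⟪(Matrix.toEuclideanCLM (𝕜 := ℝ) (W ω) :
            EuclideanSpace ℝ (Fin d) →L[ℝ] EuclideanSpace ℝ (Fin d)) x, y⟫ =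
        ⟪x, (Matrix.toEuclideanCLM (𝕜 := ℝ) (W ω) :
            EuclideanSpace ℝ (Fin d) →L[ℝ] EuclideanSpace ℝ (Fin d)) y⟫ := by
      intro x y
      exact (Matrix.isHermitian_iff_isSymmetric.mp (hpsd ω).isHermitian) x y
    have hbound : ∀ u ∈ N, |⟪(Matrix.toEuclideanCLM (𝕜 := ℝ) (W ω) :
        EuclideanSpace ℝ (Fin d) →L[ℝ] EuclideanSpace ℝ (Fin d)) u, u⟫| ≤ g ξ' := by
      intro u hu
      rw [quadform_eq]
      exact hcon u hu
    have := norm_le_two_mul_of_net _ hsym N hN1 hNnet hgξ' hbound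
    exact absurd hω (not_lt.mpr this)
  -- union bound
  calc μ {ω | 2 * g ξ' < opNorm (W ω)}
      ≤ μ (⋃ u ∈ N, {ω | g ξ' < |∑ j, ∑ l, u j * W ω j l * u l|}) := measure_mono hincl
    _ ≤ ∑ u ∈ N, μ {ω | g ξ' < |∑ j, ∑ l, u j * W ω j l * u l|} :=
        measure_biUnion_finset_le _ _
    _ ≤ ∑ _u ∈ N, ENNReal.ofReal ξ' := by
        refine Finset.sum_le_sum fun u hu => ?_
        exact h u (hsum1 u hu) ξ' hξ'mem
    _ = (N.card : ℝ≥0∞) * ENNReal.ofReal ξ' := by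
        rw [Finset.sum_const, nsmul_eq_mul]
    _ ≤ ((9 ^ d : ℕ) : ℝ≥0∞) * ENNReal.ofReal ξ' := by
        gcongr
    _ = ENNReal.ofReal ξ := by
        rw [show ((9 ^ d : ℕ) : ℝ≥0∞) = ENNReal.ofReal ((9:ℝ) ^ d) by
          rw [← ENNReal.ofReal_natCast]; norm_num,
          ← ENNReal.ofReal_mul (by positivity)]
        congr 1
        rw [hξ'def]; field_simp
end

section
/- Let D_1, …, D_n and D_1', …, D_n' be points in R^d such that D_i = D_i' for all i ≥ 2. Fix m̂ ∈ R^d, a radius ρ > 0, and an integer L ≥ 1. Define S = {i ∈ {1,…,n} : ‖D_i − m̂‖ < ρ}, S' = {i ∈ {1,…,n} : ‖D_i' − m̂‖ < ρ}, n_S = max(|S|, L) and n_{S'} = max(|S'|, L). Then ‖(1/n_S) Σ_{i∈S}(D_i − m̂) − (1/n_{S'}) Σ_{i∈S'}(D_i' − m̂)‖ ≤ 2ρ/L. -/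
open scoped Classical

section Aux

variable {E : Type*} [NormedAddCommGroup E] [NormedSpace ℝ E]

lemma aux_both (s x y : E) (N : ℝ) (L : ℕ) (hL : 1 ≤ L) (hN : (L : ℝ) ≤ N)
    (ρ : ℝ) (hρ : 0 < ρ) (hx : ‖x‖ ≤ ρ) (hy : ‖y‖ ≤ ρ) :
    ‖N⁻¹ • (x + s) - N⁻¹ • (y + s)‖ ≤ 2 * ρ / L := by
  rw [← smul_sub]
  have h : (x + s) - (y + s) = x - y := by abel
  rw [h, norm_smul, Real.norm_eq_abs]
  have hLpos : (0 : ℝ) < L := by exact_mod_cast hL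
  have hNpos : (0 : ℝ) < N := lt_of_lt_of_le hLpos hN
  have hinv : N⁻¹ ≤ (L : ℝ)⁻¹ := inv_anti₀ hLpos hN
  have hxy : ‖x - y‖ ≤ 2 * ρ := by
    calc ‖x - y‖ ≤ ‖x‖ + ‖y‖ := norm_sub_le _ _
      _ ≤ 2 * ρ := by linarith
  rw [abs_of_nonneg (le_of_lt (inv_pos.mpr hNpos))]
  calc N⁻¹ * ‖x - y‖ ≤ (L : ℝ)⁻¹ * (2 * ρ) :=
        mul_le_mul hinv hxy (norm_nonneg _) (le_of_lt (inv_pos.mpr hLpos))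
    _ = 2 * ρ / L := by ring

lemma aux_ins (s x : E) (a b c : ℝ) (L : ℕ) (hL : 1 ≤ L) (ρ : ℝ) (hρ : 0 < ρ)
    (hLa : (L : ℝ) ≤ a) (hLb : (L : ℝ) ≤ b) (hba : b ≤ a) (hab1 : a ≤ b + 1)
    (hc0 : 0 ≤ c) (hcb : c ≤ b) (hs : ‖s‖ ≤ c * ρ) (hx : ‖x‖ ≤ ρ) :
    ‖a⁻¹ • (x + s) - b⁻¹ • s‖ ≤ 2 * ρ / L := by
  have hLpos : (0 : ℝ) < L := by exact_mod_cast hL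
  have hapos : (0 : ℝ) < a := lt_of_lt_of_le hLpos hLa
  have hbpos : (0 : ℝ) < b := lt_of_lt_of_le hLpos hLb
  have key : a⁻¹ • (x + s) - b⁻¹ • s = a⁻¹ • x + (a⁻¹ - b⁻¹) • s := by
    rw [smul_add, sub_smul]; abel
  rw [key]
  have hinv_le : a⁻¹ ≤ b⁻¹ := inv_anti₀ hbpos hba
  have step : ‖a⁻¹ • x + (a⁻¹ - b⁻¹) • s‖ ≤ a⁻¹ * ρ + (b⁻¹ - a⁻¹) * (c * ρ) := by
    calc ‖a⁻¹ • x + (a⁻¹ - b⁻¹) • s‖ ≤ ‖a⁻¹ • x‖ + ‖(a⁻¹ - b⁻¹) • s‖ := norm_add_le _ _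
      _ = a⁻¹ * ‖x‖ + (b⁻¹ - a⁻¹) * ‖s‖ := by
          rw [norm_smul, norm_smul, Real.norm_eq_abs, Real.norm_eq_abs,
            abs_of_nonneg (le_of_lt (inv_pos.mpr hapos)),
            abs_of_nonpos (by linarith : a⁻¹ - b⁻¹ ≤ 0)]
          ring
      _ ≤ a⁻¹ * ρ + (b⁻¹ - a⁻¹) * (c * ρ) := by
          have h1 : a⁻¹ * ‖x‖ ≤ a⁻¹ * ρ :=
            mul_le_mul_of_nonneg_left hx (le_of_lt (inv_pos.mpr hapos))
          have h2 : (b⁻¹ - a⁻¹) * ‖s‖ ≤ (b⁻¹ - a⁻¹) * (c * ρ) :=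
            mul_le_mul_of_nonneg_left hs (by linarith)
          linarith
  refine le_trans step ?_
  have h2a : a⁻¹ * ρ + (b⁻¹ - a⁻¹) * (c * ρ) ≤ 2 * ρ / a := by
    have hbne : b ≠ 0 := ne_of_gt hbpos
    have hane : a ≠ 0 := ne_of_gt hapos
    have hsub : b⁻¹ - a⁻¹ = (a - b) / (b * a) := inv_sub_inv hbne hane
    have habnn : 0 ≤ a - b := by linarith
    have h3 : (a - b) * c ≤ b := by nlinarith
    have h4 : (b⁻¹ - a⁻¹) * (c * ρ) ≤ ρ / a := by
      rw [hsub, div_mul_eq_mul_div, div_le_div_iff₀ (by positivity) hapos]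
      nlinarith [mul_le_mul_of_nonneg_right h3 (mul_nonneg hρ.le hapos.le)]
    have h5 : a⁻¹ * ρ = ρ / a := inv_mul_eq_div a ρ
    have h6 : 2 * ρ / a = ρ / a + ρ / a := by ring
    linarith
  refine le_trans h2a ?_
  apply div_le_div_of_nonneg_left (by linarith) hLpos hLa

end Aux

/-- User-level global sensitivity of the trimmed, recentered mean statistic:
changing the data of a single user (user `1`) changes the statistic by at most
`2ρ/L` in Euclidean norm. -/
theorem stmt_16 {d : ℕ} (n : ℕ) (D D' : ℕ → EuclideanSpace ℝ (Fin d))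
    (hDD' : ∀ i, 2 ≤ i → D i = D' i)
    (mhat : EuclideanSpace ℝ (Fin d)) (ρ : ℝ) (hρ : 0 < ρ) (L : ℕ) (hL : 1 ≤ L) :
    ‖(max ((Finset.Icc 1 n).filter fun i => ‖D i - mhat‖ < ρ).card L : ℝ)⁻¹ •
        (∑ i ∈ (Finset.Icc 1 n).filter fun i => ‖D i - mhat‖ < ρ, (D i - mhat)) -
      (max ((Finset.Icc 1 n).filter fun i => ‖D' i - mhat‖ < ρ).card L : ℝ)⁻¹ •
        (∑ i ∈ (Finset.Icc 1 n).filter fun i => ‖D' i - mhat‖ < ρ, (D' i - mhat))‖ ≤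
      2 * ρ / L := by
  set S : Finset ℕ := (Finset.Icc 1 n).filter (fun i => ‖D i - mhat‖ < ρ) with hS_def
  set S' : Finset ℕ := (Finset.Icc 1 n).filter (fun i => ‖D' i - mhat‖ < ρ) with hS'_def
  set T : Finset ℕ := S.erase 1 with hT_def
  have h1T : 1 ∉ T := hT_def ▸ Finset.notMem_erase 1 S
  have hT' : S'.erase 1 = T := by
    ext i
    simp only [hT_def, hS_def, hS'_def, Finset.mem_erase, Finset.mem_filter, Finset.mem_Icc]
    constructor
    · rintro ⟨hne, ⟨ha, hb⟩, hc⟩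
      exact ⟨hne, ⟨ha, hb⟩, by rwa [hDD' i (by omega)]⟩
    · rintro ⟨hne, ⟨ha, hb⟩, hc⟩
      exact ⟨hne, ⟨ha, hb⟩, by rwa [← hDD' i (by omega)]⟩
  have hTmem : ∀ i ∈ T, 2 ≤ i := by
    intro i hi
    rw [hT_def] at hi
    have ha := Finset.ne_of_mem_erase hi
    have hb := Finset.mem_of_mem_erase hi
    rw [hS_def, Finset.mem_filter, Finset.mem_Icc] at hb
    omega
  have hsumT : ∑ i ∈ T, (D i - mhat) = ∑ i ∈ T, (D' i - mhat) := by
    apply Finset.sum_congr rfl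
    intro i hi
    rw [hDD' i (hTmem i hi)]
  have hboundT : ‖∑ i ∈ T, (D i - mhat)‖ ≤ (T.card : ℝ) * ρ := by
    calc ‖∑ i ∈ T, (D i - mhat)‖ ≤ ∑ i ∈ T, ‖D i - mhat‖ := norm_sum_le _ _
      _ ≤ ∑ _i ∈ T, ρ := by
          apply Finset.sum_le_sum
          intro i hi
          have hb := Finset.mem_of_mem_erase (hT_def ▸ hi)
          rw [hS_def, Finset.mem_filter] at hb
          exact hb.2.le
      _ = (T.card : ℝ) * ρ := by rw [Finset.sum_const, nsmul_eq_mul]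
  have hLt : (L : ℝ) ≤ max ((T.card : ℝ) + 1) (L : ℝ) := le_max_right _ _
  have hLb : (L : ℝ) ≤ max (T.card : ℝ) (L : ℝ) := le_max_right _ _
  have hba : max (T.card : ℝ) (L : ℝ) ≤ max ((T.card : ℝ) + 1) (L : ℝ) :=
    max_le_max (by linarith) le_rfl
  have hab1 : max ((T.card : ℝ) + 1) (L : ℝ) ≤ max (T.card : ℝ) (L : ℝ) + 1 := by
    apply max_le
    · linarith [le_max_left (T.card : ℝ) (L : ℝ)]
    · linarith [le_max_right (T.card : ℝ) (L : ℝ)]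
  have hcb : (T.card : ℝ) ≤ max (T.card : ℝ) (L : ℝ) := le_max_left _ _
  by_cases h1 : 1 ∈ S <;> by_cases h1' : 1 ∈ S'
  · -- both contain 1
    have hx : ‖D 1 - mhat‖ ≤ ρ := by
      rw [hS_def, Finset.mem_filter] at h1; exact h1.2.le
    have hy : ‖D' 1 - mhat‖ ≤ ρ := by
      rw [hS'_def, Finset.mem_filter] at h1'; exact h1'.2.le
    have hSins : S = insert 1 T := (Finset.insert_erase h1).symm
    have hS'ins : S' = insert 1 T := by rw [← hT', Finset.insert_erase h1']
    have hcard : (S.card : ℝ) = (T.card : ℝ) + 1 := by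
      rw [hSins, Finset.card_insert_of_notMem h1T]; push_cast; ring
    have hcard' : (S'.card : ℝ) = (T.card : ℝ) + 1 := by
      rw [hS'ins, Finset.card_insert_of_notMem h1T]; push_cast; ring
    calc ‖(max (S.card : ℝ) (L : ℝ))⁻¹ • (∑ i ∈ S, (D i - mhat)) -
          (max (S'.card : ℝ) (L : ℝ))⁻¹ • (∑ i ∈ S', (D' i - mhat))‖
        = ‖(max ((T.card : ℝ) + 1) (L : ℝ))⁻¹ •
            ((D 1 - mhat) + ∑ i ∈ T, (D i - mhat)) -
          (max ((T.card : ℝ) + 1) (L : ℝ))⁻¹ •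
            ((D' 1 - mhat) + ∑ i ∈ T, (D i - mhat))‖ := by
          rw [hcard, hcard', hsumT]
          congr 2
          · rw [hSins, Finset.sum_insert h1T, ← hsumT]
          · rw [hS'ins, Finset.sum_insert h1T]
      _ ≤ 2 * ρ / L := aux_both _ _ _ _ L hL hLt ρ hρ hx hy
  · -- 1 ∈ S, 1 ∉ S'
    have hx : ‖D 1 - mhat‖ ≤ ρ := by
      rw [hS_def, Finset.mem_filter] at h1; exact h1.2.le
    have hSins : S = insert 1 T := (Finset.insert_erase h1).symm
    have hS'T : S' = T := by rw [← hT', Finset.erase_eq_of_notMem h1']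
    have hcard : (S.card : ℝ) = (T.card : ℝ) + 1 := by
      rw [hSins, Finset.card_insert_of_notMem h1T]; push_cast; ring
    have hcard' : (S'.card : ℝ) = (T.card : ℝ) := by rw [hS'T]
    calc ‖(max (S.card : ℝ) (L : ℝ))⁻¹ • (∑ i ∈ S, (D i - mhat)) -
          (max (S'.card : ℝ) (L : ℝ))⁻¹ • (∑ i ∈ S', (D' i - mhat))‖
        = ‖(max ((T.card : ℝ) + 1) (L : ℝ))⁻¹ •
            ((D 1 - mhat) + ∑ i ∈ T, (D i - mhat)) -
          (max (T.card : ℝ) (L : ℝ))⁻¹ • (∑ i ∈ T, (D i - mhat))‖ := by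
          rw [hcard, hcard']
          congr 2
          · rw [hSins, Finset.sum_insert h1T]
          · rw [hS'T, ← hsumT]
      _ ≤ 2 * ρ / L := aux_ins _ _ _ _ _ L hL ρ hρ hLt hLb hba hab1
            (Nat.cast_nonneg _) hcb hboundT hx
  · -- 1 ∉ S, 1 ∈ S'
    have hx : ‖D' 1 - mhat‖ ≤ ρ := by
      rw [hS'_def, Finset.mem_filter] at h1'; exact h1'.2.le
    have hS'ins : S' = insert 1 T := by rw [← hT', Finset.insert_erase h1']
    have hST : S = T := by rw [hT_def, Finset.erase_eq_of_notMem h1]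
    have hcard' : (S'.card : ℝ) = (T.card : ℝ) + 1 := by
      rw [hS'ins, Finset.card_insert_of_notMem h1T]; push_cast; ring
    have hcard : (S.card : ℝ) = (T.card : ℝ) := by rw [hST]
    have hboundT' : ‖∑ i ∈ T, (D' i - mhat)‖ ≤ (T.card : ℝ) * ρ := hsumT ▸ hboundT
    calc ‖(max (S.card : ℝ) (L : ℝ))⁻¹ • (∑ i ∈ S, (D i - mhat)) -
          (max (S'.card : ℝ) (L : ℝ))⁻¹ • (∑ i ∈ S', (D' i - mhat))‖
        = ‖(max ((T.card : ℝ) + 1) (L : ℝ))⁻¹ •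
            ((D' 1 - mhat) + ∑ i ∈ T, (D' i - mhat)) -
          (max (T.card : ℝ) (L : ℝ))⁻¹ • (∑ i ∈ T, (D' i - mhat))‖ := by
          rw [norm_sub_rev, hcard, hcard']
          congr 2
          · rw [hS'ins, Finset.sum_insert h1T]
          · rw [hST, hsumT]
      _ ≤ 2 * ρ / L := aux_ins _ _ _ _ _ L hL ρ hρ hLt hLb hba hab1
            (Nat.cast_nonneg _) hcb hboundT' hx
  · -- neither contains 1
    have hST : S = T := by rw [hT_def, Finset.erase_eq_of_notMem h1]
    have hS'T : S' = T := by rw [← hT', Finset.erase_eq_of_notMem h1']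
    have hsumeq : ∑ i ∈ S, (D i - mhat) = ∑ i ∈ S', (D' i - mhat) := by
      rw [hST, hS'T, hsumT]
    have hcardeq : (S.card : ℝ) = (S'.card : ℝ) := by rw [hST, hS'T]
    rw [hsumeq, hcardeq, sub_self, norm_zero]
    positivity
end

section
/- Let β_1, …, β_n and β_1', …, β_n' be points in R^d such that β_i = β_i' for all i ≥ 2. Fix m̂, b ∈ R^d, a radius ρ > 0 and an integer L ≥ 1, and set κ = ρ + ‖b − m̂‖. Define S = {i ∈ {1,…,n} : ‖β_i − m̂‖ ≤ ρ}, S' = {i ∈ {1,…,n} : ‖β_i' − m̂‖ ≤ ρ}, n_S = max(|S|, L) and n_{S'} = max(|S'|, L). Then ‖(1/n_S²) Σ_{i∈S}(β_i − b)(β_i − b)^T − (1/n_{S'}²) Σ_{i∈S'}(β_i' − b)(β_i' − b)^T‖_F ≤ 4κ²/L², where ‖·‖_F denotes the Frobenius norm on d×d matrices. -/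
open scoped Classical

/-- Frobenius norm of a real `d × d` matrix. -/
noncomputable def frobNorm {d : ℕ} (M : Matrix (Fin d) (Fin d) ℝ) : ℝ :=
  Real.sqrt (∑ j, ∑ l, (M j l) ^ 2)

/-- Outer product `v vᵀ`. -/
noncomputable def outerMat {d : ℕ} (v : EuclideanSpace ℝ (Fin d)) : Matrix (Fin d) (Fin d) ℝ :=
  Matrix.of fun j l => v j * v l

/-- View a matrix as a Euclidean vector. -/
noncomputable def mat2e {d : ℕ} : Matrix (Fin d) (Fin d) ℝ →ₗ[ℝ] EuclideanSpace ℝ (Fin d × Fin d) where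
  toFun M := (WithLp.equiv 2 _).symm fun p => M p.1 p.2
  map_add' _ _ := rfl
  map_smul' _ _ := rfl

lemma frobNorm_eq {d : ℕ} (M : Matrix (Fin d) (Fin d) ℝ) : frobNorm M = ‖mat2e M‖ := by
  rw [frobNorm, EuclideanSpace.norm_eq]
  congr 1
  rw [Fintype.sum_prod_type]
  simp [mat2e, Real.norm_eq_abs, sq_abs]

lemma frob_outer {d : ℕ} (v : EuclideanSpace ℝ (Fin d)) : frobNorm (outerMat v) = ‖v‖ ^ 2 := by
  have hv : (0:ℝ) ≤ ∑ j, (v j) ^ 2 := by positivity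
  have h1 : frobNorm (outerMat v) = Real.sqrt ((∑ j, (v j) ^ 2) * (∑ j, (v j) ^ 2)) := by
    rw [frobNorm]
    congr 1
    rw [Finset.sum_mul_sum]
    refine Finset.sum_congr rfl fun j _ => Finset.sum_congr rfl fun l _ => ?_
    simp [outerMat, mul_pow]
  have h2 : ‖v‖ ^ 2 = ∑ j, (v j) ^ 2 := by
    rw [EuclideanSpace.norm_eq, Real.sq_sqrt (by positivity)]
    simp [sq_abs]
  rw [h1, Real.sqrt_mul_self hv, h2]

lemma norm_mat2e_sum_le {d : ℕ} (U : Finset ℕ) (f : ℕ → Matrix (Fin d) (Fin d) ℝ) (C : ℝ)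
    (h : ∀ i ∈ U, ‖mat2e (f i)‖ ≤ C) : ‖mat2e (∑ i ∈ U, f i)‖ ≤ U.card * C := by
  rw [map_sum]
  refine (norm_sum_le _ _).trans ?_
  calc ∑ i ∈ U, ‖mat2e (f i)‖ ≤ U.card • C := Finset.sum_le_card_nsmul _ _ _ h
    _ = U.card * C := nsmul_eq_mul _ _

lemma arith_aux (x y l t : ℝ) (hl : 1 ≤ l) (hx : l ≤ x) (hy : l ≤ y) (ht0 : 0 ≤ t)
    (htx : t ≤ x) (hxy : x ≤ y) (hyx : y ≤ x + 1) :
    ((x ^ 2)⁻¹ - (y ^ 2)⁻¹) * t + ((x ^ 2)⁻¹ + (y ^ 2)⁻¹) ≤ 4 / l ^ 2 := by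
  have hl0 : (0:ℝ) < l := lt_of_lt_of_le one_pos hl
  have hx0 : (0:ℝ) < x := lt_of_lt_of_le hl0 hx
  have hy0 : (0:ℝ) < y := lt_of_lt_of_le hl0 hy
  have e : ((x ^ 2)⁻¹ - (y ^ 2)⁻¹) * t + ((x ^ 2)⁻¹ + (y ^ 2)⁻¹)
      = ((y ^ 2 - x ^ 2) * t + (y ^ 2 + x ^ 2)) / (x ^ 2 * y ^ 2) := by
    field_simp
  rw [e, div_le_div_iff₀ (by positivity) (by positivity)]
  have hd : y ^ 2 - x ^ 2 ≤ 2 * y := by nlinarith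
  have h2 : (y ^ 2 - x ^ 2) * t ≤ 2 * x * y := by nlinarith
  have h3 : l ^ 2 ≤ x * y := by nlinarith
  have hl2x : l ^ 2 ≤ x ^ 2 := by nlinarith
  have hl2y : l ^ 2 ≤ y ^ 2 := by nlinarith
  nlinarith [mul_le_mul h2 h3 (by positivity) (by positivity),
    mul_le_mul_of_nonneg_left hl2x (sq_nonneg y),
    mul_le_mul_of_nonneg_left hl2y (sq_nonneg x)]

lemma arith_main (L N N' t : ℕ) (hL : 1 ≤ L) (hLN : L ≤ N) (hLN' : L ≤ N')
    (htN : t ≤ N) (htN' : t ≤ N') (hNN' : N ≤ N' + 1) (hN'N : N' ≤ N + 1)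
    (κ : ℝ) (hκ : 0 ≤ κ) :
    |((N:ℝ) ^ 2)⁻¹ - ((N':ℝ) ^ 2)⁻¹| * ((t:ℝ) * κ ^ 2) +
      (((N:ℝ) ^ 2)⁻¹ * κ ^ 2 + ((N':ℝ) ^ 2)⁻¹ * κ ^ 2) ≤ 4 * κ ^ 2 / (L:ℝ) ^ 2 := by
  have key : |((N:ℝ) ^ 2)⁻¹ - ((N':ℝ) ^ 2)⁻¹| * (t:ℝ) + (((N:ℝ) ^ 2)⁻¹ + ((N':ℝ) ^ 2)⁻¹)
      ≤ 4 / (L:ℝ) ^ 2 := by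
    rcases le_total N N' with h | h
    · have habs : |((N:ℝ) ^ 2)⁻¹ - ((N':ℝ) ^ 2)⁻¹| = ((N:ℝ) ^ 2)⁻¹ - ((N':ℝ) ^ 2)⁻¹ := by
        rw [abs_of_nonneg]
        have : ((N':ℝ) ^ 2)⁻¹ ≤ ((N:ℝ) ^ 2)⁻¹ := by
          apply inv_anti₀
          · have : (0:ℝ) < (L:ℝ) := by exact_mod_cast lt_of_lt_of_le zero_lt_one hL
            have hN0 : (0:ℝ) < (N:ℝ) := lt_of_lt_of_le this (by exact_mod_cast hLN)
            positivity
          · have : (N:ℝ) ≤ (N':ℝ) := by exact_mod_cast h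
            nlinarith [Nat.cast_nonneg (α := ℝ) N]
        linarith
      rw [habs]
      exact arith_aux (N:ℝ) (N':ℝ) (L:ℝ) (t:ℝ) (by exact_mod_cast hL) (by exact_mod_cast hLN)
        (by exact_mod_cast hLN') (Nat.cast_nonneg t) (by exact_mod_cast htN)
        (by exact_mod_cast h) (by exact_mod_cast hN'N)
    · have habs : |((N:ℝ) ^ 2)⁻¹ - ((N':ℝ) ^ 2)⁻¹| = ((N':ℝ) ^ 2)⁻¹ - ((N:ℝ) ^ 2)⁻¹ := by
        rw [abs_sub_comm, abs_of_nonneg]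
        have : ((N:ℝ) ^ 2)⁻¹ ≤ ((N':ℝ) ^ 2)⁻¹ := by
          apply inv_anti₀
          · have : (0:ℝ) < (L:ℝ) := by exact_mod_cast lt_of_lt_of_le zero_lt_one hL
            have hN0 : (0:ℝ) < (N':ℝ) := lt_of_lt_of_le this (by exact_mod_cast hLN')
            positivity
          · have : (N':ℝ) ≤ (N:ℝ) := by exact_mod_cast h
            nlinarith [Nat.cast_nonneg (α := ℝ) N']
        linarith
      rw [habs]
      have := arith_aux (N':ℝ) (N:ℝ) (L:ℝ) (t:ℝ) (by exact_mod_cast hL) (by exact_mod_cast hLN')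
        (by exact_mod_cast hLN) (Nat.cast_nonneg t) (by exact_mod_cast htN')
        (by exact_mod_cast h) (by exact_mod_cast hNN')
      linarith
  have hκ2 : (0:ℝ) ≤ κ ^ 2 := sq_nonneg κ
  calc |((N:ℝ) ^ 2)⁻¹ - ((N':ℝ) ^ 2)⁻¹| * ((t:ℝ) * κ ^ 2) +
      (((N:ℝ) ^ 2)⁻¹ * κ ^ 2 + ((N':ℝ) ^ 2)⁻¹ * κ ^ 2)
      = (|((N:ℝ) ^ 2)⁻¹ - ((N':ℝ) ^ 2)⁻¹| * (t:ℝ) + (((N:ℝ) ^ 2)⁻¹ + ((N':ℝ) ^ 2)⁻¹)) * κ ^ 2 := by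
        ring
    _ ≤ (4 / (L:ℝ) ^ 2) * κ ^ 2 := mul_le_mul_of_nonneg_right key hκ2
    _ = 4 * κ ^ 2 / (L:ℝ) ^ 2 := by ring

lemma main_aux {d : ℕ} (S S' : Finset ℕ) (v v' : ℕ → EuclideanSpace ℝ (Fin d)) (L : ℕ)
    (hL : 1 ≤ L) (κ : ℝ) (hκ : 0 ≤ κ)
    (hvS : ∀ i ∈ S, ‖v i‖ ≤ κ) (hv'S' : ∀ i ∈ S', ‖v' i‖ ≤ κ)
    (heq : S.erase 1 = S'.erase 1) (hveq : ∀ i ∈ S.erase 1, v i = v' i) :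
    frobNorm ((((max S.card L : ℕ) : ℝ) ^ 2)⁻¹ • ∑ i ∈ S, outerMat (v i) -
      (((max S'.card L : ℕ) : ℝ) ^ 2)⁻¹ • ∑ i ∈ S', outerMat (v' i)) ≤
      4 * κ ^ 2 / (L : ℝ) ^ 2 := by
  classical
  set T := S.erase 1 with hT
  set N := max S.card L with hN
  set N' := max S'.card L with hN'
  set c : ℝ := (((N : ℕ) : ℝ) ^ 2)⁻¹ with hc
  set c' : ℝ := (((N' : ℕ) : ℝ) ^ 2)⁻¹ with hc'
  have hTS : T ⊆ S := Finset.erase_subset _ _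
  have hTS' : T ⊆ S' := by rw [heq]; exact Finset.erase_subset _ _
  have hsplitS : ∑ i ∈ S \ T, outerMat (v i) + ∑ i ∈ T, outerMat (v i)
      = ∑ i ∈ S, outerMat (v i) := Finset.sum_sdiff hTS
  have hsplitS' : ∑ i ∈ S' \ T, outerMat (v' i) + ∑ i ∈ T, outerMat (v' i)
      = ∑ i ∈ S', outerMat (v' i) := Finset.sum_sdiff hTS'
  have hTeq : ∑ i ∈ T, outerMat (v i) = ∑ i ∈ T, outerMat (v' i) :=
    Finset.sum_congr rfl fun i hi => by rw [hveq i hi]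
  have hM : c • ∑ i ∈ S, outerMat (v i) - c' • ∑ i ∈ S', outerMat (v' i)
      = (c - c') • ∑ i ∈ T, outerMat (v i) +
        (c • ∑ i ∈ S \ T, outerMat (v i) - c' • ∑ i ∈ S' \ T, outerMat (v' i)) := by
    rw [← hsplitS, ← hsplitS', ← hTeq]
    simp only [smul_add, sub_smul]
    abel
  -- cardinality facts
  have hSins : S ⊆ insert 1 T := Finset.subset_insert_iff.mpr (by rw [hT])
  have hS'ins : S' ⊆ insert 1 T := Finset.subset_insert_iff.mpr (by rw [heq])
  have hScard : S.card ≤ T.card + 1 :=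
    (Finset.card_le_card hSins).trans (Finset.card_insert_le _ _)
  have hS'card : S'.card ≤ T.card + 1 :=
    (Finset.card_le_card hS'ins).trans (Finset.card_insert_le _ _)
  have hTcardS : T.card ≤ S.card := Finset.card_le_card hTS
  have hTcardS' : T.card ≤ S'.card := Finset.card_le_card hTS'
  have hWcard : (S \ T).card ≤ 1 := by
    have : S \ T ⊆ {1} := by
      intro i hi
      rw [Finset.mem_sdiff] at hi
      rw [Finset.mem_singleton]
      by_contra hne
      exact hi.2 (Finset.mem_erase.mpr ⟨hne, hi.1⟩)
    exact (Finset.card_le_card this).trans (by simp)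
  have hW'card : (S' \ T).card ≤ 1 := by
    have : S' \ T ⊆ {1} := by
      intro i hi
      rw [Finset.mem_sdiff] at hi
      rw [Finset.mem_singleton]
      by_contra hne
      exact hi.2 (by rw [heq]; exact Finset.mem_erase.mpr ⟨hne, hi.1⟩)
    exact (Finset.card_le_card this).trans (by simp)
  -- norm bounds on outer products
  have houter : ∀ i ∈ S, ‖mat2e (outerMat (v i))‖ ≤ κ ^ 2 := fun i hi => by
    rw [← frobNorm_eq, frob_outer]
    exact pow_le_pow_left₀ (norm_nonneg _) (hvS i hi) 2
  have houter' : ∀ i ∈ S', ‖mat2e (outerMat (v' i))‖ ≤ κ ^ 2 := fun i hi => by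
    rw [← frobNorm_eq, frob_outer]
    exact pow_le_pow_left₀ (norm_nonneg _) (hv'S' i hi) 2
  have hA : ‖mat2e (∑ i ∈ T, outerMat (v i))‖ ≤ (T.card : ℝ) * κ ^ 2 :=
    norm_mat2e_sum_le _ _ _ fun i hi => houter i (hTS hi)
  have hB : ‖mat2e (∑ i ∈ S \ T, outerMat (v i))‖ ≤ κ ^ 2 := by
    refine (norm_mat2e_sum_le _ _ _ fun i hi => houter i ((Finset.sdiff_subset) hi)).trans ?_
    have : ((S \ T).card : ℝ) ≤ 1 := by exact_mod_cast hWcard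
    nlinarith [sq_nonneg κ]
  have hC : ‖mat2e (∑ i ∈ S' \ T, outerMat (v' i))‖ ≤ κ ^ 2 := by
    refine (norm_mat2e_sum_le _ _ _ fun i hi => houter' i ((Finset.sdiff_subset) hi)).trans ?_
    have : ((S' \ T).card : ℝ) ≤ 1 := by exact_mod_cast hW'card
    nlinarith [sq_nonneg κ]
  have hc0 : 0 ≤ c := by positivity
  have hc'0 : 0 ≤ c' := by positivity
  rw [frobNorm_eq, hM, map_add, map_sub, map_smul, map_smul, map_smul]
  have step1 : ‖(c - c') • mat2e (∑ i ∈ T, outerMat (v i)) +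
      (c • mat2e (∑ i ∈ S \ T, outerMat (v i)) - c' • mat2e (∑ i ∈ S' \ T, outerMat (v' i)))‖
      ≤ |c - c'| * ((T.card : ℝ) * κ ^ 2) + (c * κ ^ 2 + c' * κ ^ 2) := by
    refine (norm_add_le _ _).trans ?_
    refine add_le_add ?_ ((norm_sub_le _ _).trans (add_le_add ?_ ?_))
    · rw [norm_smul, Real.norm_eq_abs]
      exact mul_le_mul_of_nonneg_left hA (abs_nonneg _)
    · rw [norm_smul, Real.norm_eq_abs, abs_of_nonneg hc0]
      exact mul_le_mul_of_nonneg_left hB hc0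
    · rw [norm_smul, Real.norm_eq_abs, abs_of_nonneg hc'0]
      exact mul_le_mul_of_nonneg_left hC hc'0
  refine step1.trans ?_
  exact arith_main L N N' T.card hL (le_max_right _ _) (le_max_right _ _)
    (hTcardS.trans (le_max_left _ _)) (hTcardS'.trans (le_max_left _ _))
    (by omega) (by omega) κ hκ

/-- User-level global sensitivity of the trimmed sample covariance statistic:
changing the data of a single user (user `1`) changes the statistic by at most
`4κ²/L²` in Frobenius norm, where `κ = ρ + ‖b − m̂‖`. -/
theorem stmt_17 {d : ℕ} (n : ℕ) (β β' : ℕ → EuclideanSpace ℝ (Fin d))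
    (hββ' : ∀ i, 2 ≤ i → β i = β' i)
    (mhat b : EuclideanSpace ℝ (Fin d)) (ρ : ℝ) (hρ : 0 < ρ) (L : ℕ) (hL : 1 ≤ L) :
    frobNorm
      ((Matrix.of fun j l =>
          ((max ((Finset.Icc 1 n).filter fun i => ‖β i - mhat‖ ≤ ρ).card L : ℝ) ^ 2)⁻¹ *
            ∑ i ∈ (Finset.Icc 1 n).filter fun i => ‖β i - mhat‖ ≤ ρ,
              (β i j - b j) * (β i l - b l)) -
        Matrix.of fun j l =>
          ((max ((Finset.Icc 1 n).filter fun i => ‖β' i - mhat‖ ≤ ρ).card L : ℝ) ^ 2)⁻¹ *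
            ∑ i ∈ (Finset.Icc 1 n).filter fun i => ‖β' i - mhat‖ ≤ ρ,
              (β' i j - b j) * (β' i l - b l)) ≤
      4 * (ρ + ‖b - mhat‖) ^ 2 / L ^ 2 := by
  classical
  set S := (Finset.Icc 1 n).filter (fun i => ‖β i - mhat‖ ≤ ρ) with hS
  set S' := (Finset.Icc 1 n).filter (fun i => ‖β' i - mhat‖ ≤ ρ) with hS'
  have hmat1 : (Matrix.of fun j l =>
        ((max S.card L : ℝ) ^ 2)⁻¹ * ∑ i ∈ S, (β i j - b j) * (β i l - b l))
      = (((max S.card L : ℕ) : ℝ) ^ 2)⁻¹ • ∑ i ∈ S, outerMat (β i - b) := by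
    ext j l
    simp [outerMat, Matrix.sum_apply, Finset.mul_sum, PiLp.sub_apply]
  have hmat2 : (Matrix.of fun j l =>
        ((max S'.card L : ℝ) ^ 2)⁻¹ * ∑ i ∈ S', (β' i j - b j) * (β' i l - b l))
      = (((max S'.card L : ℕ) : ℝ) ^ 2)⁻¹ • ∑ i ∈ S', outerMat (β' i - b) := by
    ext j l
    simp [outerMat, Matrix.sum_apply, Finset.mul_sum, PiLp.sub_apply]
  rw [hmat1, hmat2]
  have hκ0 : 0 ≤ ρ + ‖b - mhat‖ := by positivity
  have hbound : ∀ (w : EuclideanSpace ℝ (Fin d)), ‖w - mhat‖ ≤ ρ → ‖w - b‖ ≤ ρ + ‖b - mhat‖ := by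
    intro w hw
    calc ‖w - b‖ = ‖(w - mhat) - (b - mhat)‖ := by congr 1; abel
      _ ≤ ‖w - mhat‖ + ‖b - mhat‖ := norm_sub_le _ _
      _ ≤ ρ + ‖b - mhat‖ := by linarith
  have heq : S.erase 1 = S'.erase 1 := by
    ext i
    simp only [hS, hS', Finset.mem_erase, Finset.mem_filter, Finset.mem_Icc]
    constructor
    · rintro ⟨hi1, ⟨h1i, hin⟩, hρi⟩
      have h2 : 2 ≤ i := by omega
      exact ⟨hi1, ⟨h1i, hin⟩, by rwa [← hββ' i h2]⟩
    · rintro ⟨hi1, ⟨h1i, hin⟩, hρi⟩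
      have h2 : 2 ≤ i := by omega
      exact ⟨hi1, ⟨h1i, hin⟩, by rwa [hββ' i h2]⟩
  refine main_aux S S' (fun i => β i - b) (fun i => β' i - b) L hL (ρ + ‖b - mhat‖) hκ0
    (fun i hi => ?_) (fun i hi => ?_) heq (fun i hi => ?_)
  · rw [hS] at hi
    exact hbound _ (Finset.mem_filter.mp hi).2
  · rw [hS'] at hi
    exact hbound _ (Finset.mem_filter.mp hi).2
  · have h1 : i ≠ 1 := (Finset.mem_erase.mp hi).1
    have h2 : i ∈ S := (Finset.mem_erase.mp hi).2
    rw [hS, Finset.mem_filter, Finset.mem_Icc] at h2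
    have h3 : 2 ≤ i := by omega
    show β i - b = β' i - b
    rw [hββ' i h3]
end

section
/- Let D_1, …, D_n be points in R^d, let m, v ∈ R^d, and let K ≥ 0 be such that max_{1≤i≤n} ‖D_i − m‖ ≤ K. Let D̄ = n^{-1} Σ_{i=1}^n D_i. Then for every nonempty subset S ⊆ {1,…,n}, ‖|S|^{-1} Σ_{i∈S} D_i − v‖ ≤ ‖D̄ − v‖ + 2K (n − |S|)/|S|. -/
/-- Deterministic control of a trimmed average: if all points lie within distance `K`
of `m`, then for any nonempty subset `S` of `{1,…,n}`, the `S`-average is within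
`‖D̄ - v‖ + 2K(n - |S|)/|S|` of any vector `v`. -/
theorem stmt_19 {d : ℕ} (n : ℕ) (D : ℕ → EuclideanSpace ℝ (Fin d))
    (m v : EuclideanSpace ℝ (Fin d)) (K : ℝ) (hK : 0 ≤ K)
    (hbound : ∀ i ∈ Finset.Icc 1 n, ‖D i - m‖ ≤ K)
    (S : Finset ℕ) (hS : S ⊆ Finset.Icc 1 n) (hSne : S.Nonempty) :
    ‖(S.card : ℝ)⁻¹ • (∑ i ∈ S, D i) - v‖ ≤
      ‖(n : ℝ)⁻¹ • (∑ i ∈ Finset.Icc 1 n, D i) - v‖ +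
        2 * K * ((n : ℝ) - S.card) / S.card := by
  set T := Finset.Icc 1 n with hT
  have hcardT : T.card = n := by simp [hT]
  have hs : 0 < S.card := hSne.card_pos
  have hsn : S.card ≤ n := hcardT ▸ Finset.card_le_card hS
  have hn : 0 < n := lt_of_lt_of_le hs hsn
  have hs' : (0:ℝ) < (S.card : ℝ) := by exact_mod_cast hs
  have hn' : (0:ℝ) < (n : ℝ) := by exact_mod_cast hn
  have hsn' : (S.card : ℝ) ≤ (n : ℝ) := by exact_mod_cast hsn
  have hcardsd : ((T \ S).card : ℝ) = (n : ℝ) - (S.card : ℝ) := by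
    rw [Finset.card_sdiff_of_subset hS, hcardT, Nat.cast_sub hsn]
  -- the decomposition identity
  have hid : (S.card : ℝ)⁻¹ • (∑ i ∈ S, D i) - (n:ℝ)⁻¹ • (∑ i ∈ T, D i)
      = ((S.card : ℝ)⁻¹ - (n:ℝ)⁻¹) • (∑ i ∈ S, (D i - m))
        - (n:ℝ)⁻¹ • (∑ i ∈ T \ S, (D i - m)) := by
    have h1 : ∑ i ∈ S, (D i - m) = (∑ i ∈ S, D i) - (S.card : ℝ) • m := by
      rw [Finset.sum_sub_distrib, Finset.sum_const, ← Nat.cast_smul_eq_nsmul ℝ]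
    have h2 : ∑ i ∈ T \ S, (D i - m)
        = (∑ i ∈ T \ S, D i) - ((n:ℝ) - (S.card : ℝ)) • m := by
      rw [Finset.sum_sub_distrib, Finset.sum_const, ← Nat.cast_smul_eq_nsmul ℝ, hcardsd]
    have h3 : (∑ i ∈ T, D i) = (∑ i ∈ S, D i) + ∑ i ∈ T \ S, D i := by
      rw [add_comm, Finset.sum_sdiff hS]
    rw [h1, h2, h3]
    match_scalars <;> (field_simp; try ring)
  have hA : ‖∑ i ∈ S, (D i - m)‖ ≤ (S.card : ℝ) * K := by
    calc ‖∑ i ∈ S, (D i - m)‖ ≤ ∑ i ∈ S, ‖D i - m‖ := norm_sum_le _ _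
      _ ≤ ∑ _i ∈ S, K := Finset.sum_le_sum (fun i hi => hbound i (hS hi))
      _ = (S.card : ℝ) * K := by rw [Finset.sum_const, nsmul_eq_mul]
  have hB : ‖∑ i ∈ T \ S, (D i - m)‖ ≤ ((n:ℝ) - (S.card : ℝ)) * K := by
    calc ‖∑ i ∈ T \ S, (D i - m)‖ ≤ ∑ i ∈ T \ S, ‖D i - m‖ := norm_sum_le _ _
      _ ≤ ∑ _i ∈ T \ S, K :=
        Finset.sum_le_sum (fun i hi => hbound i (Finset.sdiff_subset hi))
      _ = ((n:ℝ) - (S.card : ℝ)) * K := by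
          rw [Finset.sum_const, nsmul_eq_mul, hcardsd]
  have hinvle : (n:ℝ)⁻¹ ≤ (S.card : ℝ)⁻¹ := by
    exact inv_anti₀ hs' hsn'
  have key : ‖(S.card : ℝ)⁻¹ • (∑ i ∈ S, D i) - (n:ℝ)⁻¹ • (∑ i ∈ T, D i)‖
      ≤ 2 * K * ((n:ℝ) - (S.card : ℝ)) / (S.card : ℝ) := by
    rw [hid]
    have h4 : ‖((S.card : ℝ)⁻¹ - (n:ℝ)⁻¹) • (∑ i ∈ S, (D i - m))
        - (n:ℝ)⁻¹ • (∑ i ∈ T \ S, (D i - m))‖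
        ≤ ((S.card : ℝ)⁻¹ - (n:ℝ)⁻¹) * ((S.card : ℝ) * K)
          + (n:ℝ)⁻¹ * (((n:ℝ) - (S.card : ℝ)) * K) := by
      refine (norm_sub_le _ _).trans ?_
      gcongr
      · rw [norm_smul, Real.norm_eq_abs, abs_of_nonneg (by linarith)]
        gcongr
      · rw [norm_smul, Real.norm_eq_abs, abs_of_nonneg (by positivity)]
        gcongr
    refine h4.trans ?_
    have e1 : ((S.card : ℝ)⁻¹ - (n:ℝ)⁻¹) * ((S.card : ℝ) * K)
        + (n:ℝ)⁻¹ * (((n:ℝ) - (S.card : ℝ)) * K)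
        = 2 * K * ((n:ℝ) - (S.card : ℝ)) / (n : ℝ) := by
      field_simp
      ring
    rw [e1]
    exact div_le_div_of_nonneg_left (mul_nonneg (by positivity) (by linarith)) hs' hsn'
  calc ‖(S.card : ℝ)⁻¹ • (∑ i ∈ S, D i) - v‖
      ≤ ‖(S.card : ℝ)⁻¹ • (∑ i ∈ S, D i) - (n:ℝ)⁻¹ • (∑ i ∈ T, D i)‖
        + ‖(n:ℝ)⁻¹ • (∑ i ∈ T, D i) - v‖ := by
        have := norm_add_le ((S.card : ℝ)⁻¹ • (∑ i ∈ S, D i) - (n:ℝ)⁻¹ • (∑ i ∈ T, D i))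
          ((n:ℝ)⁻¹ • (∑ i ∈ T, D i) - v)
        rwa [sub_add_sub_cancel] at this
    _ ≤ ‖(n:ℝ)⁻¹ • (∑ i ∈ T, D i) - v‖ + 2 * K * ((n:ℝ) - (S.card : ℝ)) / (S.card : ℝ) := by
        linarith [key]
end
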